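/- Let α ∈ (1/2, 1) and s > (3−4α)/8 with s < 1/4. Then sup over n ∈ ℤ of the sum over integers k, j with 0 < |j| ≤ |k| and |k| comparable to |n| of (|n|+|k|)^{4−4α}/(⟨n⟩^{2s} ⟨n+k⟩^{2s} ⟨n+j⟩^{2s} ⟨n+k+j⟩^{2s} k² j²) is finite. -/

import Mathlib

open Real

/-- Japanese bracket of an integer. -/
noncomputable def jb (m : ℤ) : ℝ := Real.sqrt (1 + (m : ℝ) ^ 2)

lemma jb_sq (m : ℤ) : jb m ^ 2 = 1 + (m:ℝ)^2 := Real.sq_sqrt (by positivity)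

lemma one_le_jb (m : ℤ) : 1 ≤ jb m := by
  rw [show (1:ℝ) = Real.sqrt 1 by simp]
  exact Real.sqrt_le_sqrt (by nlinarith [sq_nonneg ((m:ℝ))])

lemma jb_pos (m : ℤ) : 0 < jb m := lt_of_lt_of_le one_pos (one_le_jb m)

lemma jb_nonneg (m : ℤ) : 0 ≤ jb m := (jb_pos m).le

lemma abs_le_jb (m : ℤ) : |(m:ℝ)| ≤ jb m := by
  rw [← Real.sqrt_sq_eq_abs]
  exact Real.sqrt_le_sqrt (by nlinarith)

lemma jb_le_one_add (m : ℤ) : jb m ≤ 1 + |(m:ℝ)| := by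
  rw [show (1:ℝ) + |(m:ℝ)| = Real.sqrt ((1+|(m:ℝ)|)^2) from (Real.sqrt_sq (by positivity)).symm]
  apply Real.sqrt_le_sqrt
  nlinarith [abs_nonneg (m:ℝ), sq_abs (m:ℝ)]

lemma jb_neg (m : ℤ) : jb (-m) = jb m := by simp [jb]

lemma jb_key (m j : ℤ) : jb m ≤ 2 * (jb (m + j) * jb j) := by
  have h : (1:ℝ) + (m:ℝ)^2 ≤ (2:ℝ)^2 * ((1 + ((m:ℝ)+(j:ℝ))^2) * (1 + (j:ℝ)^2)) := by
    nlinarith [sq_nonneg ((m:ℝ)+(j:ℝ)), sq_nonneg (j:ℝ), sq_nonneg (((m:ℝ)+(j:ℝ))*(j:ℝ)), sq_nonneg ((m:ℝ)+(j:ℝ)+(j:ℝ))]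
  calc jb m = Real.sqrt (1 + (m:ℝ)^2) := rfl
  _ ≤ Real.sqrt ((2:ℝ)^2 * ((1 + ((m:ℝ)+(j:ℝ))^2) * (1 + (j:ℝ)^2))) := Real.sqrt_le_sqrt h
  _ = 2 * (jb (m+j) * jb j) := by
      rw [Real.sqrt_mul (by positivity), Real.sqrt_mul (by positivity),
        Real.sqrt_sq (by norm_num)]
      simp only [jb]
      push_cast
      ring_nf

lemma jb_rpow_shift (t : ℝ) (m j : ℤ) :
    jb (m + j) ^ (-t) ≤ 2 ^ |t| * jb j ^ |t| * jb m ^ (-t) := by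
  rcases le_or_gt 0 t with ht | ht
  · rw [abs_of_nonneg ht]
    have h1 : jb m ^ t ≤ 2 ^ t * jb (m+j) ^ t * jb j ^ t := by
      calc jb m ^ t ≤ (2 * (jb (m+j) * jb j)) ^ t :=
            Real.rpow_le_rpow (jb_nonneg m) (jb_key m j) ht
      _ = 2 ^ t * jb (m+j) ^ t * jb j ^ t := by
          rw [Real.mul_rpow (by norm_num) (mul_nonneg (jb_nonneg _) (jb_nonneg _)),
            Real.mul_rpow (jb_nonneg _) (jb_nonneg _)]
          ring
    have h2 := mul_le_mul_of_nonneg_right h1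
      (mul_nonneg (Real.rpow_nonneg (jb_nonneg (m+j)) (-t)) (Real.rpow_nonneg (jb_nonneg m) (-t)))
    calc jb (m+j) ^ (-t) = (jb m ^ t * jb m ^ (-t)) * jb (m+j) ^ (-t) := by
          rw [← Real.rpow_add (jb_pos m)]; simp
      _ = jb m ^ t * (jb (m+j) ^ (-t) * jb m ^ (-t)) := by ring
      _ ≤ (2 ^ t * jb (m+j) ^ t * jb j ^ t) * (jb (m+j) ^ (-t) * jb m ^ (-t)) := h2
      _ = 2 ^ t * jb j ^ t * jb m ^ (-t) * (jb (m+j) ^ t * jb (m+j) ^ (-t)) := by ring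
      _ = 2 ^ t * jb j ^ t * jb m ^ (-t) := by
          rw [← Real.rpow_add (jb_pos (m+j))]; simp
  · rw [abs_of_neg ht]
    have hkey : jb (m + j) ≤ 2 * (jb m * jb j) := by
      have h := jb_key (m+j) (-j)
      rw [add_neg_cancel_right, jb_neg] at h
      exact h
    have h2 := Real.rpow_le_rpow (jb_nonneg (m+j)) hkey (by linarith : (0:ℝ) ≤ -t)
    rw [Real.mul_rpow (by norm_num) (mul_nonneg (jb_nonneg _) (jb_nonneg _)),
      Real.mul_rpow (jb_nonneg _) (jb_nonneg _)] at h2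
    calc jb (m+j) ^ (-t) ≤ 2 ^ (-t) * (jb m ^ (-t) * jb j ^ (-t)) := h2
    _ = 2 ^ (-t) * jb j ^ (-t) * jb m ^ (-t) := by ring

lemma sum_w_aux (L : ℕ) :
    ∑ m ∈ Finset.Icc (-(L:ℤ)) (L:ℤ), (max 1 |(m:ℝ)|)⁻¹
      ≤ 3 + 2 * Real.log ((L:ℝ)+1) - 2/((L:ℝ)+1) := by
  induction L with
  | zero => norm_num
  | succ L ih =>
    have hset : Finset.Icc (-((L+1:ℕ)):ℤ) ((L+1:ℕ):ℤ) =
        insert (-((L+1:ℕ):ℤ)) (insert ((L+1:ℕ):ℤ) (Finset.Icc (-(L:ℕ):ℤ) ((L:ℕ):ℤ))) := by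
      ext x
      simp only [Finset.mem_Icc, Finset.mem_insert]
      omega
    have h1 : ((L+1:ℕ):ℤ) ∉ Finset.Icc (-(L:ℕ):ℤ) ((L:ℕ):ℤ) := by
      simp only [Finset.mem_Icc]; omega
    have h2 : (-((L+1:ℕ):ℤ)) ∉ insert ((L+1:ℕ):ℤ) (Finset.Icc (-(L:ℕ):ℤ) ((L:ℕ):ℤ)) := by
      simp only [Finset.mem_Icc, Finset.mem_insert]; omega
    rw [hset, Finset.sum_insert h2, Finset.sum_insert h1]
    have hv : ∀ x : ℤ, |(x:ℝ)| = (L:ℝ)+1 → (max 1 |(x:ℝ)|)⁻¹ = ((L:ℝ)+1)⁻¹ := by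
      intro x hx
      rw [hx, max_eq_right (by linarith [Nat.cast_nonneg (α := ℝ) L])]
    have hx1 : |(((-((L+1:ℕ):ℤ)):ℤ):ℝ)| = (L:ℝ)+1 := by
      push_cast
      rw [abs_neg, abs_of_nonneg (by positivity)]
    have hx2 : |(((L+1:ℕ):ℤ):ℝ)| = (L:ℝ)+1 := by
      push_cast
      rw [abs_of_nonneg (by positivity)]
    rw [hv _ hx1, hv _ hx2]
    have hpos : (0:ℝ) < (L:ℝ)+1 := by positivity
    have hpos2 : (0:ℝ) < (L:ℝ)+1+1 := by positivity
    have hlog : 1/((L:ℝ)+1+1) ≤ Real.log ((L:ℝ)+1+1) - Real.log ((L:ℝ)+1) := by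
      have h := Real.log_le_sub_one_of_pos (show (0:ℝ) < ((L:ℝ)+1)/((L:ℝ)+1+1) by positivity)
      rw [Real.log_div (by linarith) (by linarith)] at h
      have heq : ((L:ℝ)+1)/((L:ℝ)+1+1) - 1 = -(1/((L:ℝ)+1+1)) := by field_simp; ring
      linarith [heq ▸ h]
    have e1 : 2/((L:ℝ)+1) = ((L:ℝ)+1)⁻¹ + ((L:ℝ)+1)⁻¹ := by
      rw [div_eq_mul_inv]; ring
    have e3 : 2/((L:ℝ)+1+1) = 1/((L:ℝ)+1+1) + 1/((L:ℝ)+1+1) := by ring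
    push_cast
    linarith

lemma sum_w_le (L : ℕ) :
    ∑ m ∈ Finset.Icc (-(L:ℤ)) (L:ℤ), (max 1 |(m:ℝ)|)⁻¹ ≤ 3 + 2 * Real.log ((L:ℝ)+1) := by
  have := sum_w_aux L
  have : (0:ℝ) < (L:ℝ)+1 := by positivity
  have h4 : 0 ≤ 2/((L:ℝ)+1) := by positivity
  linarith [sum_w_aux L]

lemma sum_jb_le (θ : ℝ) (hθ : θ < 1) (L : ℕ) :
    ∑ m ∈ Finset.Icc (-(L:ℤ)) (L:ℤ), jb m ^ (-θ) ≤
      3 * ((L:ℝ)+1) ^ (1-θ) * (1 + Real.log ((L:ℝ)+1)) := by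
  have hL1 : (0:ℝ) < (L:ℝ)+1 := by positivity
  have hlog : 0 ≤ Real.log ((L:ℝ)+1) := Real.log_nonneg (by linarith)
  have habs : ∀ m ∈ Finset.Icc (-(L:ℤ)) (L:ℤ), |(m:ℝ)| ≤ (L:ℝ) := by
    intro m hm
    rw [Finset.mem_Icc] at hm
    have : |m| ≤ (L:ℤ) := abs_le.mpr hm
    rw [← Int.cast_abs]
    exact_mod_cast this
  rcases le_or_gt 0 θ with ht | ht
  · have hper : ∀ m ∈ Finset.Icc (-(L:ℤ)) (L:ℤ),
        jb m ^ (-θ) ≤ ((L:ℝ)+1)^(1-θ) * (max 1 |(m:ℝ)|)⁻¹ := by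
      intro m hm
      have hmax : (0:ℝ) < max 1 |(m:ℝ)| := lt_of_lt_of_le one_pos (le_max_left _ _)
      have h1 : jb m ^ (-θ) ≤ (max 1 |(m:ℝ)|) ^ (-θ) :=
        Real.rpow_le_rpow_of_nonpos hmax (max_le (one_le_jb m) (abs_le_jb m))
          (neg_nonpos.mpr ht)
      have h2 : (max 1 |(m:ℝ)|) ^ (-θ) = (max 1 |(m:ℝ)|)^(1-θ) * (max 1 |(m:ℝ)|)⁻¹ := by
        rw [← Real.rpow_neg_one (max 1 |(m:ℝ)|), ← Real.rpow_add hmax]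
        congr 1
        ring
      have h3 : (max 1 |(m:ℝ)|)^(1-θ) ≤ ((L:ℝ)+1)^(1-θ) := by
        apply Real.rpow_le_rpow hmax.le _ (by linarith)
        exact max_le (by linarith) (by linarith [habs m hm])
      calc jb m ^ (-θ) ≤ (max 1 |(m:ℝ)|) ^ (-θ) := h1
      _ = (max 1 |(m:ℝ)|)^(1-θ) * (max 1 |(m:ℝ)|)⁻¹ := h2
      _ ≤ ((L:ℝ)+1)^(1-θ) * (max 1 |(m:ℝ)|)⁻¹ :=
          mul_le_mul_of_nonneg_right h3 (by positivity)
    have hrp : 0 ≤ ((L:ℝ)+1)^(1-θ) := Real.rpow_nonneg hL1.le _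
    calc ∑ m ∈ Finset.Icc (-(L:ℤ)) (L:ℤ), jb m ^ (-θ)
        ≤ ∑ m ∈ Finset.Icc (-(L:ℤ)) (L:ℤ), ((L:ℝ)+1)^(1-θ) * (max 1 |(m:ℝ)|)⁻¹ :=
          Finset.sum_le_sum hper
    _ = ((L:ℝ)+1)^(1-θ) * ∑ m ∈ Finset.Icc (-(L:ℤ)) (L:ℤ), (max 1 |(m:ℝ)|)⁻¹ :=
          (Finset.mul_sum _ _ _).symm
    _ ≤ ((L:ℝ)+1)^(1-θ) * (3 + 2 * Real.log ((L:ℝ)+1)) :=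
          mul_le_mul_of_nonneg_left (sum_w_le L) hrp
    _ ≤ 3 * ((L:ℝ)+1) ^ (1-θ) * (1 + Real.log ((L:ℝ)+1)) := by nlinarith
  · have hper : ∀ m ∈ Finset.Icc (-(L:ℤ)) (L:ℤ), jb m ^ (-θ) ≤ ((L:ℝ)+1) ^ (-θ) := by
      intro m hm
      apply Real.rpow_le_rpow (jb_nonneg m) _ (by linarith)
      calc jb m ≤ 1 + |(m:ℝ)| := jb_le_one_add m
      _ ≤ (L:ℝ)+1 := by linarith [habs m hm]
    have hcard : (Finset.Icc (-(L:ℤ)) (L:ℤ)).card = 2*L+1 := by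
      rw [Int.card_Icc]
      omega
    have hsum := Finset.sum_le_card_nsmul _ _ _ hper
    rw [hcard] at hsum
    have hsmul : (2*L+1) • ((L:ℝ)+1) ^ (-θ) = ((2*L+1:ℕ):ℝ) * ((L:ℝ)+1) ^ (-θ) := by
      rw [nsmul_eq_mul]
    rw [hsmul] at hsum
    have hsplit : ((L:ℝ)+1) ^ (1-θ) = ((L:ℝ)+1) * ((L:ℝ)+1) ^ (-θ) := by
      rw [show (1:ℝ)-θ = 1 + -θ by ring, Real.rpow_add hL1, Real.rpow_one]
    have hrp : 0 ≤ ((L:ℝ)+1)^(-θ) := Real.rpow_nonneg hL1.le _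
    have hcount : ((2*L+1:ℕ):ℝ) ≤ 3*((L:ℝ)+1) := by push_cast; linarith [Nat.cast_nonneg (α := ℝ) L]
    calc ∑ m ∈ Finset.Icc (-(L:ℤ)) (L:ℤ), jb m ^ (-θ)
        ≤ ((2*L+1:ℕ):ℝ) * ((L:ℝ)+1) ^ (-θ) := hsum
    _ ≤ 3*((L:ℝ)+1) * ((L:ℝ)+1) ^ (-θ) := mul_le_mul_of_nonneg_right hcount hrp
    _ = 3 * ((L:ℝ)+1) ^ (1-θ) := by rw [hsplit]; ring
    _ ≤ 3 * ((L:ℝ)+1) ^ (1-θ) * (1 + Real.log ((L:ℝ)+1)) := by nlinarith [Real.rpow_nonneg hL1.le (1-θ)]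

lemma inv_sq_bound (A : ℝ) (hA0 : 0 < A) (n k : ℤ) (hn1 : 1 ≤ (n:ℝ)^2)
    (hkne : (k:ℝ) ≠ 0) (hnk : |(n:ℝ)| ≤ A * |(k:ℝ)|) :
    ((k:ℝ)^2)⁻¹ ≤ 2*A^2 * jb n ^ (-(2:ℝ)) := by
  have hjb2 : jb n ^ (-(2:ℝ)) = ((jb n)^2)⁻¹ := by
    rw [Real.rpow_neg (jb_nonneg n), show ((2:ℝ)) = ((2:ℕ):ℝ) by norm_num,
      Real.rpow_natCast]
  rw [hjb2]
  have hk2pos : (0:ℝ) < (k:ℝ)^2 := by positivity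
  have hjb2pos : (0:ℝ) < (jb n)^2 := pow_pos (jb_pos n) 2
  rw [show (2*A^2 * ((jb n)^2)⁻¹ : ℝ) = (2*A^2) / (jb n)^2 by ring,
    show (((k:ℝ)^2)⁻¹ : ℝ) = 1/(k:ℝ)^2 by ring,
    div_le_div_iff₀ hk2pos hjb2pos]
  have hsq : |(n:ℝ)|^2 ≤ (A*|(k:ℝ)|)^2 := by
    apply pow_le_pow_left₀ (abs_nonneg _) hnk
  nlinarith [jb_sq n, sq_abs (n:ℝ), sq_abs (k:ℝ)]

set_option maxHeartbeats 1000000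

/-- uniform-in-`n` bound in the region `|k| ≈ |n|`.
Here `p.1 = k` and `p.2 = j`; `|k| ≈ |n|` means `A⁻¹|n| ≤ |k| ≤ A|n|`. -/
theorem stmt_8 (α s : ℝ) (hα : 1 / 2 < α) (hα1 : α < 1)
    (hs : (3 - 4 * α) / 8 < s) (hs4 : s < 1 / 4) :
    ∀ A : ℝ, 1 < A → ∃ C : ℝ, ∀ n : ℤ,
      (∑' p : ℤ × ℤ,
        if 0 < |p.2| ∧ |p.2| ≤ |p.1| ∧ (|n| : ℝ) ≤ A * (|p.1| : ℝ) ∧ (|p.1| : ℝ) ≤ A * (|n| : ℝ) then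
          ((|n| : ℝ) + (|p.1| : ℝ)) ^ (4 - 4 * α) /
            (jb n ^ (2 * s) * jb (n + p.1) ^ (2 * s) * jb (n + p.2) ^ (2 * s)
              * jb (n + p.1 + p.2) ^ (2 * s) * (p.1 : ℝ) ^ 2 * (p.2 : ℝ) ^ 2)
        else 0) ≤ C := by
  intro A hA
  have hδpos : (0:ℝ) < 4*α + 8*s - 3 := by linarith
  have hθ1 : 4*s < 1 := by linarith
  have hτ0 : (0:ℝ) ≤ |2*s| := abs_nonneg _
  have hβ1 : 2*|2*s| < 1 := by
    rcases abs_cases (2*s) with ⟨h, _⟩ | ⟨h, _⟩ <;> (rw [h]; linarith)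
  have hA0 : (0:ℝ) < A := by linarith
  have h1A : (0:ℝ) < 1 + A := by linarith
  have hA2 : (1:ℝ) < A + 2 := by linarith
  have hA2' : (0:ℝ) < A + 2 := by linarith
  -- the j-sum function
  set b : ℤ → ℝ := fun j => jb j ^ (2*|2*s|) * ((j:ℝ)^2)⁻¹ with hbdef
  have hb0 : ∀ j, 0 ≤ b j := fun j => mul_nonneg (Real.rpow_nonneg (jb_nonneg j) _) (by positivity)
  have hble : ∀ j : ℤ, b j ≤ 2^(2*|2*s|) * |(j:ℝ)| ^ (2*|2*s| - 2) := by
    intro j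
    rcases eq_or_ne j 0 with rfl | hj
    · simp only [hbdef]
      rw [Int.cast_zero, abs_zero, Real.zero_rpow (by linarith : 2*|2*s| - 2 ≠ 0)]
      norm_num
    · have hjpos : (0:ℝ) < |(j:ℝ)| := by
        simp only [abs_pos, ne_eq, Int.cast_eq_zero]; exact hj
      have hj1 : (1:ℝ) ≤ |(j:ℝ)| := by
        rw [← Int.cast_abs]
        exact_mod_cast Int.one_le_abs (by exact_mod_cast hj)
      have h1 : jb j ^ (2*|2*s|) ≤ (2 * |(j:ℝ)|) ^ (2*|2*s|) := by
        apply Real.rpow_le_rpow (jb_nonneg j) _ (by linarith)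
        calc jb j ≤ 1 + |(j:ℝ)| := jb_le_one_add j
        _ ≤ 2 * |(j:ℝ)| := by linarith
      have h2 : ((j:ℝ)^2)⁻¹ = |(j:ℝ)| ^ (-(2:ℝ)) := by
        rw [Real.rpow_neg (abs_nonneg _), show ((2:ℝ)) = ((2:ℕ):ℝ) by norm_num,
          Real.rpow_natCast, sq_abs]
      calc b j = jb j ^ (2*|2*s|) * ((j:ℝ)^2)⁻¹ := rfl
      _ ≤ (2 * |(j:ℝ)|) ^ (2*|2*s|) * ((j:ℝ)^2)⁻¹ := by
          apply mul_le_mul_of_nonneg_right h1 (by positivity)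
      _ = 2^(2*|2*s|) * (|(j:ℝ)| ^ (2*|2*s|) * |(j:ℝ)| ^ (-(2:ℝ))) := by
          rw [Real.mul_rpow (by norm_num) (abs_nonneg _), h2]; ring
      _ = 2^(2*|2*s|) * |(j:ℝ)| ^ (2*|2*s| - 2) := by
          rw [← Real.rpow_add hjpos]; ring_nf
  have hbsummable : Summable b := by
    apply Summable.of_nonneg_of_le hb0 hble
    have h21 : (1:ℝ) < 2 - 2*|2*s| := by linarith
    have hmaj := (Real.summable_abs_int_rpow h21).mul_left ((2:ℝ)^(2*|2*s|))
    convert hmaj using 2 with j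
    congr 1
    ring
  set Sb : ℝ := ∑' j, b j with hSbdef
  have hSb0 : 0 ≤ Sb := tsum_nonneg hb0
  -- constants
  set C0 : ℝ := (1+A)^(4-4*α) * (2*A^2) * ((2:ℝ)^|2*s| * (2:ℝ)^|2*s|) with hC0def
  have hC00 : 0 ≤ C0 := by
    apply mul_nonneg (mul_nonneg (Real.rpow_nonneg h1A.le _) (by positivity))
    positivity
  set C1 : ℝ := C0 * (3*(A+2)^(1-4*s)) * Sb with hC1def
  have hC10 : 0 ≤ C1 := by
    apply mul_nonneg (mul_nonneg hC00 _) hSb0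
    positivity
  have hlogA2 : 0 ≤ Real.log (A+2) := Real.log_nonneg hA2.le
  refine ⟨C1 * ((1 + Real.log (A+2)) + 2/(4*α + 8*s - 3)), ?_⟩
  have hCnonneg : 0 ≤ C1 * ((1 + Real.log (A+2)) + 2/(4*α + 8*s - 3)) := by
    apply mul_nonneg hC10
    have : 0 ≤ 2/(4*α + 8*s - 3) := by positivity
    linarith
  intro n
  set f : ℤ × ℤ → ℝ := fun p =>
    if 0 < |p.2| ∧ |p.2| ≤ |p.1| ∧ (|n| : ℝ) ≤ A * (|p.1| : ℝ) ∧ (|p.1| : ℝ) ≤ A * (|n| : ℝ) then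
      ((|n| : ℝ) + (|p.1| : ℝ)) ^ (4 - 4 * α) /
        (jb n ^ (2 * s) * jb (n + p.1) ^ (2 * s) * jb (n + p.2) ^ (2 * s)
          * jb (n + p.1 + p.2) ^ (2 * s) * (p.1 : ℝ) ^ 2 * (p.2 : ℝ) ^ 2)
    else 0 with hfdef
  show ∑' p, f p ≤ _
  rcases eq_or_ne n 0 with rfl | hn
  · have hz : ∀ p : ℤ × ℤ, f p = 0 := by
      intro p
      simp only [hfdef]
      apply if_neg
      rintro ⟨h1, h2, h3, h4⟩
      have h5 : |((p.1:ℤ):ℝ)| ≤ 0 := by simpa using h4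
      have h6 : |p.1| ≤ 0 := by exact_mod_cast (by rwa [← Int.cast_abs] at h5 : ((|p.1|:ℤ):ℝ) ≤ 0)
      omega
    rw [show f = (fun _ : ℤ × ℤ => (0:ℝ)) from funext hz, tsum_zero]
    exact hCnonneg
  -- main case n ≠ 0
  have hn1 : (1:ℝ) ≤ (n:ℝ)^2 := by
    have h0 : (1:ℤ) ≤ |n| := Int.one_le_abs hn
    have h2 : (1:ℝ) ≤ |(n:ℝ)| := by rw [← Int.cast_abs]; exact_mod_cast h0
    nlinarith [abs_nonneg (n:ℝ), sq_abs (n:ℝ)]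
  have habsn : |(n:ℝ)| ≤ jb n := abs_le_jb n
  have habsn0 : (0:ℝ) ≤ |(n:ℝ)| := abs_nonneg _
  -- the k-sum function
  set K : ℤ := ⌊A * |(n:ℝ)|⌋ with hKdef
  have hK0 : 0 ≤ K := by
    apply Int.le_floor.mpr
    push_cast
    positivity
  set u : ℤ → ℝ := fun k => if |(k:ℝ)| ≤ A * |(n:ℝ)| then jb (n+k) ^ (-(4*s)) else 0 with hudef
  have hu0 : ∀ k, 0 ≤ u k := by
    intro k
    simp only [hudef]
    split_ifs
    · exact Real.rpow_nonneg (jb_nonneg _) _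
    · exact le_rfl
  have hufin : ∀ k : ℤ, k ∉ Finset.Icc (-K) K → u k = 0 := by
    intro k hk
    simp only [hudef]
    apply if_neg
    intro hcon
    apply hk
    rw [Finset.mem_Icc]
    have h7 : |k| ≤ K := by
      apply Int.le_floor.mpr
      push_cast
      exact hcon
    exact ⟨by linarith [neg_abs_le k], by linarith [le_abs_self k]⟩
  have husum : Summable u := summable_of_ne_finset_zero hufin
  have hu0' : (0:ℤ → ℝ) ≤ u := fun k => hu0 k
  have hb0' : (0:ℤ → ℝ) ≤ b := fun j => hb0 j
  have hprodsum : Summable (fun p : ℤ × ℤ => u p.1 * b p.2) :=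
    husum.mul_of_nonneg hbsummable hu0' hb0'
  have hgsum : Summable (fun p : ℤ × ℤ => (C0 * jb n ^ (2-4*α-4*s)) * (u p.1 * b p.2)) :=
    hprodsum.mul_left _
  -- pointwise bound
  have hpt : ∀ p : ℤ × ℤ, f p ≤ (C0 * jb n ^ (2-4*α-4*s)) * (u p.1 * b p.2) := by
    rintro ⟨k, j⟩
    simp only [hfdef]
    split_ifs with hc
    · obtain ⟨hj0, hjk, hnk, hkn⟩ := hc
      have hk0 : k ≠ 0 := by
        intro h; subst h; simp only [abs_zero] at hjk; omega
      have hj0' : j ≠ 0 := by intro h; subst h; simp at hj0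
      have hkne : (k:ℝ) ≠ 0 := Int.cast_ne_zero.mpr hk0
      have hjne : (j:ℝ) ≠ 0 := Int.cast_ne_zero.mpr hj0'
      have hk2pos : (0:ℝ) < (k:ℝ)^2 := by positivity
      have hj2pos : (0:ℝ) < (j:ℝ)^2 := by positivity
      -- nonnegativity facts
      have nnX1 : (0:ℝ) ≤ jb n ^ (-(2*s)) := Real.rpow_nonneg (jb_nonneg n) _
      have nnX2 : (0:ℝ) ≤ jb (n+k) ^ (-(2*s)) := Real.rpow_nonneg (jb_nonneg (n+k)) _
      have nnX3 : (0:ℝ) ≤ jb (n+j) ^ (-(2*s)) := Real.rpow_nonneg (jb_nonneg (n+j)) _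
      have nnX4 : (0:ℝ) ≤ jb (n+k+j) ^ (-(2*s)) := Real.rpow_nonneg (jb_nonneg (n+k+j)) _
      have nnK2 : (0:ℝ) ≤ ((k:ℝ)^2)⁻¹ := by positivity
      have nnJ2 : (0:ℝ) ≤ ((j:ℝ)^2)⁻¹ := by positivity
      have nnN' : (0:ℝ) ≤ (1+A)^(4-4*α) * jb n ^ (4-4*α) :=
        mul_nonneg (Real.rpow_nonneg h1A.le _) (Real.rpow_nonneg (jb_nonneg n) _)
      have nnY3 : (0:ℝ) ≤ 2^|2*s| * jb j ^ |2*s| * jb n ^ (-(2*s)) :=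
        mul_nonneg (mul_nonneg (Real.rpow_nonneg (by norm_num) _)
          (Real.rpow_nonneg (jb_nonneg j) _)) nnX1
      have nnY4 : (0:ℝ) ≤ 2^|2*s| * jb j ^ |2*s| * jb (n+k) ^ (-(2*s)) :=
        mul_nonneg (mul_nonneg (Real.rpow_nonneg (by norm_num) _)
          (Real.rpow_nonneg (jb_nonneg j) _)) nnX2
      have nnK' : (0:ℝ) ≤ 2*A^2 * jb n ^ (-(2:ℝ)) :=
        mul_nonneg (by positivity) (Real.rpow_nonneg (jb_nonneg n) _)
      -- factor bounds
      have hB1 : (|(n:ℝ)| + |(k:ℝ)|) ^ (4-4*α) ≤ (1+A)^(4-4*α) * jb n ^ (4-4*α) := by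
        rw [← Real.mul_rpow h1A.le (jb_nonneg n)]
        apply Real.rpow_le_rpow (by positivity) _ (by linarith)
        have hAk : A * |(n:ℝ)| ≤ A * jb n := mul_le_mul_of_nonneg_left habsn hA0.le
        linarith [hkn, hAk, habsn]
      have hB4 := jb_rpow_shift (2*s) n j
      have hB5 := jb_rpow_shift (2*s) (n+k) j
      have hB6 : ((k:ℝ)^2)⁻¹ ≤ 2*A^2 * jb n ^ (-(2:ℝ)) :=
        inv_sq_bound A hA0 n k hn1 hkne hnk
      -- rewrite the division as a product
      have hD : (|(n:ℝ)| + |(k:ℝ)|) ^ (4 - 4*α) /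
            (jb n ^ (2*s) * jb (n + k) ^ (2*s) * jb (n + j) ^ (2*s)
              * jb (n + k + j) ^ (2*s) * (k:ℝ)^2 * (j:ℝ)^2)
          = (|(n:ℝ)| + |(k:ℝ)|) ^ (4 - 4*α) * jb n ^ (-(2*s)) * jb (n+k) ^ (-(2*s))
              * jb (n+j) ^ (-(2*s)) * jb (n+k+j) ^ (-(2*s)) * ((k:ℝ)^2)⁻¹ * ((j:ℝ)^2)⁻¹ := by
        rw [Real.rpow_neg (jb_nonneg n), Real.rpow_neg (jb_nonneg (n+k)),
          Real.rpow_neg (jb_nonneg (n+j)), Real.rpow_neg (jb_nonneg (n+k+j))]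
        ring
      rw [hD]
      -- chain of multiplications
      have h_a : (|(n:ℝ)| + |(k:ℝ)|) ^ (4 - 4*α) * jb n ^ (-(2*s)) * jb (n+k) ^ (-(2*s))
          ≤ ((1+A)^(4-4*α) * jb n ^ (4-4*α)) * jb n ^ (-(2*s)) * jb (n+k) ^ (-(2*s)) :=
        mul_le_mul_of_nonneg_right (mul_le_mul_of_nonneg_right hB1 nnX1) nnX2
      have nn_a : (0:ℝ) ≤ ((1+A)^(4-4*α) * jb n ^ (4-4*α)) * jb n ^ (-(2*s)) * jb (n+k) ^ (-(2*s)) :=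
        mul_nonneg (mul_nonneg nnN' nnX1) nnX2
      have h_b := mul_le_mul h_a hB4 nnX3 nn_a
      have nn_b : (0:ℝ) ≤ ((1+A)^(4-4*α) * jb n ^ (4-4*α)) * jb n ^ (-(2*s)) * jb (n+k) ^ (-(2*s))
          * (2^|2*s| * jb j ^ |2*s| * jb n ^ (-(2*s))) := mul_nonneg nn_a nnY3
      have h_c := mul_le_mul h_b hB5 nnX4 nn_b
      have nn_c : (0:ℝ) ≤ ((1+A)^(4-4*α) * jb n ^ (4-4*α)) * jb n ^ (-(2*s)) * jb (n+k) ^ (-(2*s))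
          * (2^|2*s| * jb j ^ |2*s| * jb n ^ (-(2*s)))
          * (2^|2*s| * jb j ^ |2*s| * jb (n+k) ^ (-(2*s))) := mul_nonneg nn_b nnY4
      have h_d := mul_le_mul h_c hB6 nnK2 nn_c
      have h_e := mul_le_mul_of_nonneg_right h_d nnJ2
      refine le_trans h_e (le_of_eq ?_)
      -- now an identity of rpow products
      have hun : u k = jb (n+k) ^ (-(4*s)) := by
        simp only [hudef]
        exact if_pos hkn
      have hbj : b j = jb j ^ (2*|2*s|) * ((j:ℝ)^2)⁻¹ := rfl
      have ea : jb n ^ (4-4*α) * jb n ^ (-(2*s)) * jb n ^ (-(2*s)) * jb n ^ (-(2:ℝ))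
          = jb n ^ (2-4*α-4*s) := by
        rw [← Real.rpow_add (jb_pos n), ← Real.rpow_add (jb_pos n),
          ← Real.rpow_add (jb_pos n)]
        congr 1
        ring
      have ec : jb (n+k) ^ (-(2*s)) * jb (n+k) ^ (-(2*s)) = jb (n+k) ^ (-(4*s)) := by
        rw [← Real.rpow_add (jb_pos (n+k))]
        congr 1
        ring
      have ew : jb j ^ |2*s| * jb j ^ |2*s| = jb j ^ (2*|2*s|) := by
        rw [← Real.rpow_add (jb_pos j)]
        congr 1
        ring
      calc ((1+A)^(4-4*α) * jb n ^ (4-4*α)) * jb n ^ (-(2*s)) * jb (n+k) ^ (-(2*s))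
            * (2^|2*s| * jb j ^ |2*s| * jb n ^ (-(2*s)))
            * (2^|2*s| * jb j ^ |2*s| * jb (n+k) ^ (-(2*s)))
            * (2*A^2 * jb n ^ (-(2:ℝ))) * ((j:ℝ)^2)⁻¹
          = ((1+A)^(4-4*α) * (2*A^2) * ((2:ℝ)^|2*s| * (2:ℝ)^|2*s|))
            * (jb n ^ (4-4*α) * jb n ^ (-(2*s)) * jb n ^ (-(2*s)) * jb n ^ (-(2:ℝ)))
            * (jb (n+k) ^ (-(2*s)) * jb (n+k) ^ (-(2*s)))
            * (jb j ^ |2*s| * jb j ^ |2*s|) * ((j:ℝ)^2)⁻¹ := by ring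
      _ = C0 * jb n ^ (2-4*α-4*s) * jb (n+k) ^ (-(4*s)) * jb j ^ (2*|2*s|) * ((j:ℝ)^2)⁻¹ := by
          rw [ea, ec, ew, hC0def]
      _ = (C0 * jb n ^ (2-4*α-4*s)) * (u k * b j) := by
          rw [hun, hbj]; ring
    · exact mul_nonneg (mul_nonneg hC00 (Real.rpow_nonneg (jb_nonneg n) _))
        (mul_nonneg (hu0 k) (hb0 j))
  -- sum the bound
  by_cases hfs : Summable f
  · have hstep := Summable.tsum_le_tsum hpt hfs hgsum
    refine le_trans hstep ?_
    have htg : ∑' p : ℤ × ℤ, (C0 * jb n ^ (2-4*α-4*s)) * (u p.1 * b p.2)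
        = (C0 * jb n ^ (2-4*α-4*s)) * ((∑' k, u k) * Sb) := by
      rw [tsum_mul_left]
      congr 1
      rw [Summable.tsum_prod' hprodsum (fun k => hbsummable.mul_left (u k))]
      calc ∑' (k : ℤ), ∑' (j : ℤ), u k * b j = ∑' (k : ℤ), u k * Sb := by
            congr 1; funext k; rw [tsum_mul_left]
      _ = (∑' k, u k) * Sb := tsum_mul_right
    rw [htg]
    -- bound the k-sum
    have hLnat : ((K + |n|).toNat : ℤ) = K + |n| :=
      Int.toNat_of_nonneg (add_nonneg hK0 (abs_nonneg n))
    set L : ℕ := (K + |n|).toNat with hLdef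
    have hLr : (L:ℝ) = (K:ℝ) + |(n:ℝ)| := by
      have h8 : ((L:ℤ):ℝ) = ((K + |n| : ℤ):ℝ) := by rw [hLnat]
      push_cast at h8
      exact h8
    have htsum_u : ∑' k, u k = ∑ k ∈ Finset.Icc (-K) K, u k := tsum_eq_sum hufin
    have hsum_eq : ∑ k ∈ Finset.Icc (-K) K, u k
        = ∑ k ∈ Finset.Icc (-K) K, jb (n+k) ^ (-(4*s)) := by
      apply Finset.sum_congr rfl
      intro k hk
      rw [Finset.mem_Icc] at hk
      simp only [hudef]
      apply if_pos
      have h9 : |k| ≤ K := abs_le.mpr hk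
      have h10 : ((|k|:ℤ):ℝ) ≤ (K:ℝ) := by exact_mod_cast h9
      have h11 := le_trans h10 (Int.floor_le (A * |(n:ℝ)|))
      rwa [Int.cast_abs] at h11
    have hmap : ∑ k ∈ Finset.Icc (-K) K, jb (n+k) ^ (-(4*s))
        = ∑ m ∈ Finset.Icc (n + -K) (n + K), jb m ^ (-(4*s)) := by
      rw [← Finset.map_add_left_Icc, Finset.sum_map]
      rfl
    have hsubset : Finset.Icc (n + -K) (n + K) ⊆ Finset.Icc (-(L:ℤ)) (L:ℤ) := by
      intro m hm
      rw [Finset.mem_Icc] at hm ⊢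
      rw [hLnat]
      constructor <;> linarith [le_abs_self n, neg_abs_le n, hm.1, hm.2]
    have hmono := Finset.sum_le_sum_of_subset_of_nonneg
      (f := fun m => jb m ^ (-(4*s))) hsubset
      (fun m _ _ => Real.rpow_nonneg (jb_nonneg m) _)
    have hL1 := sum_jb_le (4*s) hθ1 L
    have hKA : (K:ℝ) ≤ A * |(n:ℝ)| := Int.floor_le _
    have hjb1 : (1:ℝ) ≤ jb n := one_le_jb n
    have hLb : (L:ℝ)+1 ≤ (A+2) * jb n := by
      rw [hLr]
      nlinarith [mul_le_mul_of_nonneg_left habsn hA0.le]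
    have hL1pos : (0:ℝ) < (L:ℝ)+1 := by positivity
    have hjbpos : (0:ℝ) < jb n := jb_pos n
    have hfinal_u : 3*((L:ℝ)+1)^(1-4*s)*(1+Real.log ((L:ℝ)+1))
        ≤ 3*(A+2)^(1-4*s) * (jb n^(1-4*s) * (1 + (Real.log (A+2) + Real.log (jb n)))) := by
      have hm1 : ((L:ℝ)+1)^(1-4*s) ≤ ((A+2)*jb n)^(1-4*s) :=
        Real.rpow_le_rpow hL1pos.le hLb (by linarith)
      have hm2 : Real.log ((L:ℝ)+1) ≤ Real.log ((A+2)*jb n) := Real.log_le_log hL1pos hLb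
      have hsplit : ((A+2)*jb n)^(1-4*s) = (A+2)^(1-4*s) * jb n^(1-4*s) :=
        Real.mul_rpow hA2'.le (jb_nonneg n)
      have hlogsplit : Real.log ((A+2)*jb n) = Real.log (A+2) + Real.log (jb n) :=
        Real.log_mul (ne_of_gt hA2') (ne_of_gt hjbpos)
      have hL0 : 0 ≤ Real.log ((L:ℝ)+1) := Real.log_nonneg (by linarith [Nat.cast_nonneg (α := ℝ) L])
      have hrp0 : 0 ≤ ((L:ℝ)+1)^(1-4*s) := Real.rpow_nonneg hL1pos.le _
      calc 3*((L:ℝ)+1)^(1-4*s)*(1+Real.log ((L:ℝ)+1))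
          ≤ 3*((A+2)*jb n)^(1-4*s)*(1+Real.log ((A+2)*jb n)) := by
            apply mul_le_mul (by linarith) (by linarith) (by linarith) (by nlinarith [Real.rpow_nonneg (mul_nonneg hA2'.le (jb_nonneg n)) (1-4*s)])
      _ = 3*(A+2)^(1-4*s) * (jb n^(1-4*s) * (1 + (Real.log (A+2) + Real.log (jb n)))) := by
            rw [hsplit, hlogsplit]; ring
    have hU : ∑' k, u k ≤ 3*(A+2)^(1-4*s) * (jb n^(1-4*s) * (1 + (Real.log (A+2) + Real.log (jb n)))) := by
      rw [htsum_u, hsum_eq, hmap]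
      exact le_trans hmono (le_trans hL1 hfinal_u)
    -- put everything together
    have hCjb : 0 ≤ C0 * jb n ^ (2-4*α-4*s) :=
      mul_nonneg hC00 (Real.rpow_nonneg (jb_nonneg n) _)
    have hstep2 : (C0 * jb n ^ (2-4*α-4*s)) * ((∑' k, u k) * Sb)
        ≤ (C0 * jb n ^ (2-4*α-4*s)) *
          ((3*(A+2)^(1-4*s) * (jb n^(1-4*s) * (1 + (Real.log (A+2) + Real.log (jb n))))) * Sb) :=
      mul_le_mul_of_nonneg_left (mul_le_mul_of_nonneg_right hU hSb0) hCjb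
    refine le_trans hstep2 ?_
    have hpow : jb n ^ (2-4*α-4*s) * jb n ^ (1-4*s) = jb n ^ (-(4*α + 8*s - 3)) := by
      rw [← Real.rpow_add hjbpos]
      congr 1
      ring
    have hre : (C0 * jb n ^ (2-4*α-4*s)) *
          ((3*(A+2)^(1-4*s) * (jb n^(1-4*s) * (1 + (Real.log (A+2) + Real.log (jb n))))) * Sb)
        = C1 * (jb n ^ (-(4*α + 8*s - 3)) * (1 + (Real.log (A+2) + Real.log (jb n)))) := by
      rw [hC1def, ← hpow]
      ring
    rw [hre]
    apply mul_le_mul_of_nonneg_left _ hC10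
    -- final scalar bound
    have hjlog0 : 0 ≤ Real.log (jb n) := Real.log_nonneg hjb1
    have hb1 : jb n ^ (-(4*α + 8*s - 3)) ≤ 1 :=
      Real.rpow_le_one_of_one_le_of_nonpos hjb1 (by linarith)
    have hb1' : 0 ≤ jb n ^ (-(4*α + 8*s - 3)) := Real.rpow_nonneg (jb_nonneg n) _
    have hlogb : Real.log (jb n) ≤ (2/(4*α + 8*s - 3)) * jb n ^ ((4*α + 8*s - 3)/2) := by
      have hx := Real.log_le_sub_one_of_pos (Real.rpow_pos_of_pos hjbpos ((4*α + 8*s - 3)/2))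
      rw [Real.log_rpow hjbpos] at hx
      calc Real.log (jb n)
          = (2/(4*α + 8*s - 3)) * ((4*α + 8*s - 3)/2 * Real.log (jb n)) := by
            field_simp
      _ ≤ (2/(4*α + 8*s - 3)) * (jb n ^ ((4*α + 8*s - 3)/2) - 1) := by
            apply mul_le_mul_of_nonneg_left hx (by positivity)
      _ ≤ (2/(4*α + 8*s - 3)) * jb n ^ ((4*α + 8*s - 3)/2) := by
            nlinarith [(by positivity : (0:ℝ) ≤ 2/(4*α + 8*s - 3))]
    have h2 : jb n ^ (-(4*α + 8*s - 3)) * Real.log (jb n) ≤ 2/(4*α + 8*s - 3) := by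
      calc jb n ^ (-(4*α + 8*s - 3)) * Real.log (jb n)
          ≤ jb n ^ (-(4*α + 8*s - 3)) * ((2/(4*α + 8*s - 3)) * jb n ^ ((4*α + 8*s - 3)/2)) :=
            mul_le_mul_of_nonneg_left hlogb hb1'
      _ = (2/(4*α + 8*s - 3)) * (jb n ^ (-(4*α + 8*s - 3)) * jb n ^ ((4*α + 8*s - 3)/2)) := by
            ring
      _ = (2/(4*α + 8*s - 3)) * jb n ^ (-(4*α + 8*s - 3) + (4*α + 8*s - 3)/2) := by
            rw [← Real.rpow_add hjbpos]
      _ ≤ (2/(4*α + 8*s - 3)) * 1 := by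
            apply mul_le_mul_of_nonneg_left
              (Real.rpow_le_one_of_one_le_of_nonpos hjb1 (by linarith)) (by positivity)
      _ = 2/(4*α + 8*s - 3) := mul_one _
    have h3 : jb n ^ (-(4*α + 8*s - 3)) * (1 + Real.log (A+2)) ≤ 1 + Real.log (A+2) := by
      nlinarith
    calc jb n ^ (-(4*α + 8*s - 3)) * (1 + (Real.log (A+2) + Real.log (jb n)))
        = jb n ^ (-(4*α + 8*s - 3)) * (1 + Real.log (A+2))
          + jb n ^ (-(4*α + 8*s - 3)) * Real.log (jb n) := by ring
    _ ≤ (1 + Real.log (A+2)) + 2/(4*α + 8*s - 3) := add_le_add h3 h2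
  · rw [tsum_eq_zero_of_not_summable hfs]
    exact hCnonneg
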